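/- For every integer n ≥ 1, the auxiliary quantities satisfy r_{n+1}(t) + r_n(t) = γ + (t − α_n) R_n(t). -/

import Mathlib

open MeasureTheory Polynomial

private lemma intAbsRpow {b s : ℝ} (hb : 0 < b) (hs : -1 < s) :
    Integrable fun x : ℝ => |x| ^ s * Real.exp (-b * x ^ 2) := by
  have hpos : IntegrableOn (fun x : ℝ => |x| ^ s * Real.exp (-b * x ^ 2)) (Set.Ioi 0) := by
    refine (integrableOn_rpow_mul_exp_neg_mul_sq hb hs).congr_fun
      (fun x hx => ?_) measurableSet_Ioi
    rw [abs_of_pos hx]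
  rw [← integrableOn_univ, ← Set.Iio_union_Ici (a := (0 : ℝ)), integrableOn_union,
    integrableOn_Ici_iff_integrableOn_Ioi]
  refine ⟨?_, hpos⟩
  rw [← (Measure.measurePreserving_neg (volume : Measure ℝ)).integrableOn_comp_preimage
      (Homeomorph.neg ℝ).measurableEmbedding]
  simpa [Function.comp_def, neg_sq, abs_neg] using hpos

private lemma evalAbsBound (Q : Polynomial ℝ) (x : ℝ) :
    |Q.eval x| ≤ ∑ i ∈ Finset.range (Q.natDegree + 1), |Q.coeff i| * |x| ^ i := by
  rw [eval_eq_sum_range]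
  refine (Finset.abs_sum_le_sum_abs _ _).trans (le_of_eq ?_)
  exact Finset.sum_congr rfl fun i _ => by rw [abs_mul, abs_pow]

private lemma rpow_abs_mul {s : ℝ} (hs : -1 < s) (i : ℕ) (x : ℝ) :
    |x| ^ i * |x| ^ s = |x| ^ (s + i) := by
  rcases eq_or_ne x 0 with rfl | hx
  · rcases Nat.eq_zero_or_pos i with rfl | hi
    · simp
    · have h1 : (1:ℝ) ≤ (i:ℝ) := by exact_mod_cast hi
      rw [abs_zero, zero_pow hi.ne', zero_mul, Real.zero_rpow (by linarith)]
  · rw [← Real.rpow_natCast |x| i, ← Real.rpow_add (abs_pos.mpr hx), add_comm]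

private lemma intPolyRpow (t s : ℝ) (hs : -1 < s) (Q : Polynomial ℝ) :
    Integrable fun y : ℝ => |Q.eval y| * (Real.exp (-y ^ 2 + t * y) * |y - t| ^ s) := by
  set R : Polynomial ℝ := Q.comp (X + C t) with hRdef
  have hRe : ∀ x : ℝ, R.eval x = Q.eval (x + t) := by
    intro x; simp [hRdef, eval_comp]
  set g : ℝ → ℝ := fun x => |R.eval x| * (Real.exp (-x ^ 2 - t * x) * |x| ^ s) with hg
  have hgint : Integrable g := by
    set B : ℝ → ℝ := fun x => ∑ i ∈ Finset.range (R.natDegree + 1),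
      Real.exp (t ^ 2 / 2) * |R.coeff i| * (|x| ^ (s + i) * Real.exp (-(1/2 : ℝ) * x ^ 2)) with hB
    have hBint : Integrable B := by
      refine integrable_finset_sum _ fun i _ => ?_
      exact (intAbsRpow (by norm_num) (by linarith [Nat.cast_nonneg (α := ℝ) i])).const_mul _
    refine hBint.mono' ?_ (ae_of_all _ fun x => ?_)
    · refine Measurable.aestronglyMeasurable ?_
      exact (R.continuous.measurable.abs).mul
        ((measurable_id.pow_const 2 |>.neg.sub (measurable_id.const_mul t)).exp.mul
          (measurable_abs.pow_const s))
    · have hg0 : 0 ≤ g x := by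
        refine mul_nonneg (abs_nonneg _) (mul_nonneg (Real.exp_pos _).le ?_)
        exact Real.rpow_nonneg (abs_nonneg _) _
      rw [Real.norm_eq_abs, abs_of_nonneg hg0]
      have hE : Real.exp (-x ^ 2 - t * x) ≤ Real.exp (t ^ 2 / 2) * Real.exp (-(1/2 : ℝ) * x ^ 2) := by
        rw [← Real.exp_add]
        exact Real.exp_le_exp.mpr (by nlinarith [sq_nonneg (x + t)])
      calc g x ≤ (∑ i ∈ Finset.range (R.natDegree + 1), |R.coeff i| * |x| ^ i) *
            (Real.exp (-x ^ 2 - t * x) * |x| ^ s) := by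
            refine mul_le_mul_of_nonneg_right (evalAbsBound R x) ?_
            exact mul_nonneg (Real.exp_pos _).le (Real.rpow_nonneg (abs_nonneg _) _)
        _ = ∑ i ∈ Finset.range (R.natDegree + 1),
            |R.coeff i| * |x| ^ i * (Real.exp (-x ^ 2 - t * x) * |x| ^ s) := by
            rw [Finset.sum_mul]
        _ ≤ B x := by
            refine Finset.sum_le_sum fun i _ => ?_
            have h1 : |R.coeff i| * |x| ^ i * (Real.exp (-x ^ 2 - t * x) * |x| ^ s)
                = (|R.coeff i| * (|x| ^ i * |x| ^ s)) * Real.exp (-x ^ 2 - t * x) := by ring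
            have h2 : (|R.coeff i| * (|x| ^ i * |x| ^ s)) *
                (Real.exp (t ^ 2 / 2) * Real.exp (-(1/2 : ℝ) * x ^ 2))
                = Real.exp (t ^ 2 / 2) * |R.coeff i| * (|x| ^ (s + i) * Real.exp (-(1/2 : ℝ) * x ^ 2)) := by
              rw [rpow_abs_mul hs]; ring
            rw [h1, ← h2]
            refine mul_le_mul_of_nonneg_left hE ?_
            have := Real.rpow_nonneg (abs_nonneg x) s
            positivity
  have : (fun y : ℝ => |Q.eval y| * (Real.exp (-y ^ 2 + t * y) * |y - t| ^ s))
      = fun y => g (y - t) := by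
    funext y
    simp only [hg]
    rw [hRe (y - t), sub_add_cancel]
    ring_nf
  rw [this]
  exact hgint.comp_sub_right t

/-- For every n >= 1, r_{n+1}(t) + r_n(t) = gamma + (t - alpha_n) R_n(t). -/
theorem r_sum_identity
    (t γ A B : ℝ) (hγ : 0 < γ) (hA : 0 ≤ A) (hAB : 0 ≤ A + B)
    (hABpos : 0 < A ∨ 0 < A + B)
    (w : ℝ → ℝ)
    (hw : ∀ y : ℝ, w y =
      Real.exp (-y ^ 2 + t * y) * |y - t| ^ γ *
        (A + B * (if 0 < y - t then (1 : ℝ) else 0)))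
    (P : ℕ → Polynomial ℝ)
    (hmonic : ∀ n, (P n).Monic)
    (hdeg : ∀ n, (P n).natDegree = n)
    (horth : ∀ m n, m ≠ n →
      ∫ y : ℝ, (P m).eval y * (P n).eval y * w y = 0)
    (h : ℕ → ℝ)
    (hh : ∀ n, h n = ∫ y : ℝ, ((P n).eval y) ^ 2 * w y)
    (hhpos : ∀ n, 0 < h n)
    (α : ℕ → ℝ)
    (hα : ∀ n, α n = (∫ y : ℝ, y * ((P n).eval y) ^ 2 * w y) / h n)
    (R : ℕ → ℝ)
    (hR : ∀ n, R n = γ / h n * ∫ y : ℝ, ((P n).eval y) ^ 2 * w y / (y - t))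
    (r : ℕ → ℝ)
    (hr : ∀ n, 1 ≤ n → r n = γ / h (n - 1) *
      ∫ y : ℝ, (P n).eval y * (P (n - 1)).eval y * w y / (y - t)) :
    ∀ n : ℕ, 1 ≤ n → r (n + 1) + r n = γ + (t - α n) * R n := by
  -- basic facts about w
  have hq0 : ∀ y : ℝ, 0 ≤ A + B * (if 0 < y - t then (1 : ℝ) else 0) := by
    intro y; split <;> simp <;> linarith
  have hqb : ∀ y : ℝ, A + B * (if 0 < y - t then (1 : ℝ) else 0) ≤ A + |B| := by
    intro y; split
    · simp only [mul_one]; linarith [le_abs_self B]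
    · simp only [mul_zero, add_zero]; linarith [abs_nonneg B]
  have hw0 : ∀ y, 0 ≤ w y := by
    intro y; rw [hw y]
    exact mul_nonneg (mul_nonneg (Real.exp_pos _).le (Real.rpow_nonneg (abs_nonneg _) _)) (hq0 y)
  have hwt : w t = 0 := by
    rw [hw t]; simp [Real.zero_rpow hγ.ne']
  have hwmeas : Measurable w := by
    have : w = fun y => Real.exp (-y ^ 2 + t * y) * |y - t| ^ γ *
        (A + B * (if 0 < y - t then (1 : ℝ) else 0)) := funext hw
    rw [this]
    refine Measurable.mul (Measurable.mul ?_ ?_) ?_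
    · exact ((measurable_id.pow_const 2).neg.add (measurable_id.const_mul t)).exp
    · exact ((measurable_id.sub_const t).abs).pow_const γ
    · refine measurable_const.add (Measurable.const_mul ?_ B)
      exact Measurable.ite (measurableSet_lt measurable_const (measurable_id.sub_const t))
        measurable_const measurable_const
  have hwb : ∀ y, w y ≤ (A + |B|) * (Real.exp (-y ^ 2 + t * y) * |y - t| ^ γ) := by
    intro y; rw [hw y]
    have h1 : 0 ≤ Real.exp (-y ^ 2 + t * y) * |y - t| ^ γ :=
      mul_nonneg (Real.exp_pos _).le (Real.rpow_nonneg (abs_nonneg _) _)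
    calc Real.exp (-y ^ 2 + t * y) * |y - t| ^ γ * (A + B * (if 0 < y - t then (1 : ℝ) else 0))
        ≤ Real.exp (-y ^ 2 + t * y) * |y - t| ^ γ * (A + |B|) :=
          mul_le_mul_of_nonneg_left (hqb y) h1
      _ = (A + |B|) * (Real.exp (-y ^ 2 + t * y) * |y - t| ^ γ) := by ring
  -- integrability
  have IW1 : ∀ Q : Polynomial ℝ, Integrable fun y => Q.eval y * w y := by
    intro Q
    refine ((intPolyRpow t γ (by linarith) Q).const_mul (A + |B|)).mono'
      ((Q.continuous.measurable.mul hwmeas).aestronglyMeasurable) (ae_of_all _ fun y => ?_)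
    rw [Real.norm_eq_abs, abs_mul, abs_of_nonneg (hw0 y)]
    calc |Q.eval y| * w y
        ≤ |Q.eval y| * ((A + |B|) * (Real.exp (-y ^ 2 + t * y) * |y - t| ^ γ)) :=
          mul_le_mul_of_nonneg_left (hwb y) (abs_nonneg _)
      _ = (A + |B|) * (|Q.eval y| * (Real.exp (-y ^ 2 + t * y) * |y - t| ^ γ)) := by ring
  have IW2 : ∀ Q : Polynomial ℝ, Integrable fun y => Q.eval y * w y / (y - t) := by
    intro Q
    refine ((intPolyRpow t (γ - 1) (by linarith) Q).const_mul (A + |B|)).mono'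
      (((Q.continuous.measurable.mul hwmeas).div
        (measurable_id.sub_const t)).aestronglyMeasurable)
      (ae_of_all _ fun y => ?_)
    by_cases hy : y = t
    · rw [hy, hwt]
      simp only [mul_zero, zero_div, norm_zero]
      have := Real.rpow_nonneg (abs_nonneg (t - t)) (γ - 1)
      positivity
    · have hyt : (0:ℝ) < |y - t| := abs_pos.mpr (sub_ne_zero.mpr hy)
      rw [Real.norm_eq_abs, abs_div, abs_mul, abs_of_nonneg (hw0 y)]
      have key : |y - t| ^ γ / |y - t| = |y - t| ^ (γ - 1) := by
        rw [Real.rpow_sub_one (ne_of_gt hyt)]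
      calc |Q.eval y| * w y / |y - t|
          ≤ |Q.eval y| * ((A + |B|) * (Real.exp (-y ^ 2 + t * y) * |y - t| ^ γ)) / |y - t| := by
            gcongr
            exact hwb y
        _ = (A + |B|) * (|Q.eval y| * (Real.exp (-y ^ 2 + t * y) * (|y - t| ^ γ / |y - t|))) := by
            ring
        _ = (A + |B|) * (|Q.eval y| * (Real.exp (-y ^ 2 + t * y) * |y - t| ^ (γ - 1))) := by
            rw [key]
  -- the integral functionals
  set I : Polynomial ℝ → ℝ := fun Q => ∫ y : ℝ, Q.eval y * w y with hI
  have hI_add : ∀ Q1 Q2 : Polynomial ℝ, I (Q1 + Q2) = I Q1 + I Q2 := by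
    intro Q1 Q2
    simp only [hI, eval_add, add_mul]
    exact integral_add (IW1 Q1) (IW1 Q2)
  have hI_smul : ∀ (c : ℝ) (Q : Polynomial ℝ), I (c • Q) = c * I Q := by
    intro c Q
    simp only [hI, eval_smul, smul_eq_mul, mul_assoc]
    exact integral_const_mul c _
  have hI_zero : I 0 = 0 := by simp [hI]
  have horth' : ∀ m k : ℕ, m ≠ k → I (P m * P k) = 0 := by
    intro m k hmk
    simp only [hI, eval_mul]
    exact horth m k hmk
  have hself : ∀ k : ℕ, I (P k * P k) = h k := by
    intro k
    simp only [hI, eval_mul]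
    rw [hh k]
    congr 1; funext y; ring
  -- vanishing against lower-degree polynomials
  have B1N : ∀ N k : ℕ, N < k → ∀ Q : Polynomial ℝ, Q.natDegree ≤ N → I (Q * P k) = 0 := by
    intro N
    induction N with
    | zero =>
      intro k hk Q hQ
      have hP0 : P 0 = 1 := ((hmonic 0).natDegree_eq_zero).mp (hdeg 0)
      have hQc : Q = Q.coeff 0 • P 0 := by
        rw [hP0, smul_eq_C_mul, mul_one]
        exact eq_C_of_natDegree_le_zero hQ
      rw [hQc, smul_mul_assoc, hI_smul, horth' 0 k (by omega), mul_zero]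
    | succ N ih =>
      intro k hk Q hQ
      by_cases hd : Q.natDegree ≤ N
      · exact ih k (by omega) Q hd
      · have hdeq : Q.natDegree = N + 1 := le_antisymm hQ (by omega)
        set c := Q.coeff (N + 1) with hc
        set Q' := Q - c • P (N + 1) with hQ'
        have hco : ∀ i, N + 1 ≤ i → Q'.coeff i = 0 := by
          intro i hi
          rcases eq_or_lt_of_le hi with hieq | hilt
          · simp only [hQ', coeff_sub, coeff_smul, smul_eq_mul, ← hieq]
            have : (P (N + 1)).coeff (N + 1) = 1 := by
              have := (hmonic (N + 1)).coeff_natDegree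
              rwa [hdeg (N + 1)] at this
            rw [this, mul_one, ← hc, sub_self]
          · simp only [hQ', coeff_sub, coeff_smul, smul_eq_mul]
            rw [coeff_eq_zero_of_natDegree_lt (by omega : Q.natDegree < i),
              coeff_eq_zero_of_natDegree_lt (by rw [hdeg]; omega : (P (N + 1)).natDegree < i)]
            ring
        have hQ'deg : Q'.natDegree ≤ N :=
          natDegree_le_iff_coeff_eq_zero.mpr fun i hi => hco i (by omega)
        have hQeq : Q = c • P (N + 1) + Q' := by rw [hQ']; ring
        rw [hQeq, add_mul, hI_add, smul_mul_assoc, hI_smul, horth' (N + 1) k (by omega),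
          ih k (by omega) Q' hQ'deg, mul_zero, add_zero]
  have B1 : ∀ (k : ℕ) (Q : Polynomial ℝ), (∀ i, k ≤ i → Q.coeff i = 0) → I (Q * P k) = 0 := by
    intro k Q hcf
    by_cases hQ0 : Q = 0
    · rw [hQ0, zero_mul, hI_zero]
    · rcases Nat.eq_zero_or_pos k with rfl | hk
      · exact absurd (Polynomial.ext fun i => by
          rw [hcf i (Nat.zero_le i), coeff_zero]) hQ0
      · have : Q.natDegree ≤ k - 1 :=
          natDegree_le_iff_coeff_eq_zero.mpr fun i hi => hcf i (by omega)
        exact B1N (k - 1) k (by omega) Q this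
  -- leading-coefficient extraction
  have WayA : ∀ Q : Polynomial ℝ, Q ≠ 0 → I (Q * P Q.natDegree) = Q.leadingCoeff * h Q.natDegree := by
    intro Q hQ0
    set d := Q.natDegree with hd
    set c := Q.coeff d with hc
    set Q' := Q - c • P d with hQ'
    have hco : ∀ i, d ≤ i → Q'.coeff i = 0 := by
      intro i hi
      rcases eq_or_lt_of_le hi with hieq | hilt
      · simp only [hQ', coeff_sub, coeff_smul, smul_eq_mul, ← hieq]
        have : (P d).coeff d = 1 := by
          have := (hmonic d).coeff_natDegree
          rwa [hdeg d] at this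
        rw [this, mul_one, ← hc, sub_self]
      · simp only [hQ', coeff_sub, coeff_smul, smul_eq_mul]
        rw [coeff_eq_zero_of_natDegree_lt (by omega : Q.natDegree < i),
          coeff_eq_zero_of_natDegree_lt (by rw [hdeg]; omega : (P d).natDegree < i)]
        ring
    have hQeq : Q = c • P d + Q' := by rw [hQ']; ring
    calc I (Q * P d) = I ((c • P d + Q') * P d) := by rw [← hQeq]
      _ = c * I (P d * P d) + I (Q' * P d) := by
          rw [add_mul, hI_add, smul_mul_assoc, hI_smul]
      _ = c * h d := by rw [hself d, B1 d Q' hco, add_zero]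
      _ = Q.leadingCoeff * h d := by rw [hc]; rfl
  -- decomposition of X * P d
  have hXPd : ∀ d : ℕ, ∃ S : Polynomial ℝ, X * P d = P (d + 1) + S ∧
      ∀ i, d + 1 ≤ i → S.coeff i = 0 := by
    intro d
    refine ⟨X * P d - P (d + 1), by ring, fun i hi => ?_⟩
    have hXPmon : (X * P d).Monic := (monic_X).mul (hmonic d)
    have hXPdeg : (X * P d).natDegree = d + 1 := by
      rw [(monic_X).natDegree_mul (hmonic d), natDegree_X, hdeg, add_comm]
    rcases eq_or_lt_of_le hi with hieq | hilt
    · rw [coeff_sub, ← hieq]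
      have h1 : (X * P d).coeff (d + 1) = 1 := by
        have := hXPmon.coeff_natDegree; rwa [hXPdeg] at this
      have h2 : (P (d + 1)).coeff (d + 1) = 1 := by
        have := (hmonic (d + 1)).coeff_natDegree; rwa [hdeg (d + 1)] at this
      rw [h1, h2, sub_self]
    · rw [coeff_sub,
        coeff_eq_zero_of_natDegree_lt (by rw [hXPdeg]; omega : (X * P d).natDegree < i),
        coeff_eq_zero_of_natDegree_lt (by rw [hdeg]; omega : (P (d + 1)).natDegree < i)]
      ring
  have hI_sub : ∀ Q1 Q2 : Polynomial ℝ, I (Q1 - Q2) = I Q1 - I Q2 := by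
    intro Q1 Q2
    rw [sub_eq_add_neg, ← neg_one_smul ℝ Q2, hI_add, hI_smul]
    ring
  -- main body
  intro n hn
  have hhn : h n ≠ 0 := (hhpos n).ne'
  have hhn1 : h (n - 1) ≠ 0 := (hhpos (n - 1)).ne'
  set β : ℝ := h n / h (n - 1) with hβ
  set Qs : Polynomial ℝ := P (n + 1) - (X - C (α n)) * P n + β • P (n - 1) with hQs
  have hXnn : I (X * P n * P n) = α n * h n := by
    have e1 : I (X * P n * P n) = ∫ y : ℝ, y * (P n).eval y ^ 2 * w y := by
      simp only [hI]
      congr 1; funext y; simp only [eval_mul, eval_X]; ring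
    rw [e1]
    exact (div_eq_iff hhn).mp (hα n).symm
  have hMdeg : ((X - C (α n)) * P n).natDegree = n + 1 := by
    rw [(monic_X_sub_C (α n)).natDegree_mul (hmonic n), natDegree_X_sub_C, hdeg, add_comm]
  have hQscoeff : ∀ i, n + 1 ≤ i → Qs.coeff i = 0 := by
    intro i hi
    simp only [hQs, coeff_add, coeff_sub, coeff_smul, smul_eq_mul]
    rcases eq_or_lt_of_le hi with hieq | hilt
    · have h1 : (P (n + 1)).coeff i = 1 := by
        have := (hmonic (n + 1)).coeff_natDegree; rw [hdeg (n + 1)] at this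
        rw [← hieq]; exact this
      have h2 : ((X - C (α n)) * P n).coeff i = 1 := by
        have := ((monic_X_sub_C (α n)).mul (hmonic n)).coeff_natDegree
        rw [hMdeg] at this; rw [← hieq]; exact this
      have h3 : (P (n - 1)).coeff i = 0 :=
        coeff_eq_zero_of_natDegree_lt (by rw [hdeg]; omega)
      rw [h1, h2, h3]; ring
    · rw [coeff_eq_zero_of_natDegree_lt (by rw [hdeg]; omega : (P (n + 1)).natDegree < i),
        coeff_eq_zero_of_natDegree_lt (by rw [hMdeg]; omega),
        coeff_eq_zero_of_natDegree_lt (by rw [hdeg]; omega : (P (n - 1)).natDegree < i)]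
      ring
  have hQsdeg : Qs.natDegree ≤ n :=
    natDegree_le_iff_coeff_eq_zero.mpr fun i hi => hQscoeff i (by omega)
  have hQs0 : Qs = 0 := by
    by_contra hne
    set d := Qs.natDegree with hdd
    have hdn : d ≤ n := hQsdeg
    have hexp : I (Qs * P d) =
        I (P (n + 1) * P d) - (I ((X * P n) * P d) - α n * I (P n * P d))
          + β * I (P (n - 1) * P d) := by
      have e : Qs * P d = (P (n + 1) * P d - ((X * P n) * P d - (α n) • (P n * P d)))
          + β • (P (n - 1) * P d) := by
        simp only [hQs, smul_eq_C_mul]; ring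
      rw [e, hI_add, hI_smul, hI_sub, hI_sub, hI_smul]
    have hPd1 : I (P (n + 1) * P d) = 0 := horth' _ _ (by omega)
    have main : I (Qs * P d) = 0 := by
      rcases eq_or_lt_of_le hdn with hdeq | hdlt
      · rw [hexp, hdeq, horth' (n + 1) n (by omega), hXnn, hself n,
          horth' (n - 1) n (by omega)]
        ring
      · obtain ⟨S, hS, hScoeff⟩ := hXPd d
        have hcomm : (X * P n) * P d = (X * P d) * P n := by ring
        have hXPdPn : I ((X * P d) * P n) = (if d + 1 = n then h n else 0) := by
          rw [hS, add_mul, hI_add, B1 n S (fun i hi => hScoeff i (by omega))]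
          by_cases hdn1 : d + 1 = n
          · rw [hdn1, hself, if_pos rfl, add_zero]
          · rw [horth' _ _ hdn1, if_neg hdn1, add_zero]
        rw [hexp, hcomm, hXPdPn, hPd1, horth' n d (by omega)]
        rcases eq_or_ne d (n - 1) with hd1 | hd1
        · rw [if_pos (by omega), hd1, hself (n - 1), hβ]
          field_simp
          ring
        · rw [if_neg (by omega), horth' (n - 1) d (fun hcon => hd1 hcon.symm)]
          ring
    have hlc := WayA Qs hne
    rw [main] at hlc
    exact absurd hlc.symm
      (mul_ne_zero (leadingCoeff_ne_zero.mpr hne) (hhpos d).ne')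
  -- three-term recurrence, evaluated
  have hrec : ∀ y : ℝ, (P (n + 1)).eval y * (P n).eval y
      + β * ((P n).eval y * (P (n - 1)).eval y) = (y - α n) * (P n).eval y ^ 2 := by
    intro y
    have h0 : Qs.eval y = 0 := by rw [hQs0]; simp
    simp only [hQs, eval_add, eval_sub, eval_mul, eval_X, eval_C, eval_smul,
      smul_eq_mul] at h0
    linear_combination ((P n).eval y) * h0
  -- pointwise integrand identity
  have hpt : ∀ y : ℝ, (P (n + 1)).eval y * (P n).eval y * w y / (y - t)
      + β * ((P n).eval y * (P (n - 1)).eval y * w y / (y - t))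
      = (P n).eval y ^ 2 * w y + (t - α n) * ((P n).eval y ^ 2 * w y / (y - t)) := by
    intro y
    by_cases hy : y = t
    · rw [hy, hwt]; simp
    · have h0 : y - t ≠ 0 := sub_ne_zero.mpr hy
      field_simp
      linear_combination (w y) * hrec y
  have hint1 : Integrable fun y : ℝ => (P (n + 1)).eval y * (P n).eval y * w y / (y - t) := by
    simpa only [eval_mul] using IW2 (P (n + 1) * P n)
  have hint2 : Integrable fun y : ℝ => (P n).eval y * (P (n - 1)).eval y * w y / (y - t) := by
    simpa only [eval_mul] using IW2 (P n * P (n - 1))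
  have hint3 : Integrable fun y : ℝ => (P n).eval y ^ 2 * w y := by
    have := IW1 ((P n) ^ 2)
    simp only [Polynomial.eval_pow] at this
    exact this
  have hint4 : Integrable fun y : ℝ => (P n).eval y ^ 2 * w y / (y - t) := by
    have := IW2 ((P n) ^ 2)
    simp only [Polynomial.eval_pow] at this
    exact this
  have key : (∫ y : ℝ, (P (n + 1)).eval y * (P n).eval y * w y / (y - t))
      + β * ∫ y : ℝ, (P n).eval y * (P (n - 1)).eval y * w y / (y - t)
      = h n + (t - α n) * ∫ y : ℝ, (P n).eval y ^ 2 * w y / (y - t) := by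
    rw [hh n, ← integral_const_mul β, ← integral_const_mul (t - α n),
      ← integral_add hint1 (hint2.const_mul β),
      ← integral_add hint3 (hint4.const_mul (t - α n))]
    have : (fun y : ℝ => (P (n + 1)).eval y * (P n).eval y * w y / (y - t)
        + β * ((P n).eval y * (P (n - 1)).eval y * w y / (y - t)))
        = fun y : ℝ => (P n).eval y ^ 2 * w y
          + (t - α n) * ((P n).eval y ^ 2 * w y / (y - t)) := funext hpt
    rw [this]
  rw [hr (n + 1) (by omega), hr n hn, hR n]
  simp only [Nat.add_sub_cancel]
  rw [hβ] at key
  field_simp at key ⊢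
  linear_combination key
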